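/- Let f be a real polynomial of degree N with leading coefficient 1. For each fixed b ≤ B < 0, all real roots (in a) of the remainder coefficients P(f,a,b) and Q(f,a,b) are uniformly bounded: there is a constant C (depending on f and B but not on b ∈ (-∞, B]) such that every such root α satisfies |α| ≤ C·|b|^{1/2}. -/

import Mathlib

open Polynomial
set_option maxHeartbeats 1000000

lemma aux_eval_le (p : ℝ[X]) (n m : ℕ) (hn : p.natDegree < n) (hnm : n ≤ m + 1) (x : ℝ) :
    |p.eval x| ≤ (∑ i ∈ Finset.range n, |p.coeff i|) * max 1 |x| ^ m := by
  rw [Polynomial.eval_eq_sum_range' hn]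
  refine (Finset.abs_sum_le_sum_abs _ _).trans ?_
  rw [Finset.sum_mul]
  apply Finset.sum_le_sum
  intro i hi
  rw [abs_mul, abs_pow]
  have h1 : |x| ^ i ≤ (max 1 |x|) ^ m := by
    calc |x| ^ i ≤ (max 1 |x|) ^ i :=
          pow_le_pow_left₀ (abs_nonneg x) (le_max_right _ _) i
      _ ≤ (max 1 |x|) ^ m :=
          pow_le_pow_right₀ (le_max_left _ _) (by have := Finset.mem_range.1 hi; omega)
  exact mul_le_mul_of_nonneg_left h1 (abs_nonneg _)

lemma aux_eval_ge (f : ℝ[X]) (hf : f.Monic) (hN0 : 0 < f.natDegree) (x : ℝ)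
    (hx : 2 * (∑ i ∈ Finset.range (f.natDegree + 1), |f.coeff i|) ≤ |x|) :
    |x| ^ f.natDegree ≤ 2 * |f.eval x| := by
  set N := f.natDegree with hNdef
  set S := ∑ i ∈ Finset.range (N + 1), |f.coeff i| with hSdef
  have hS0 : ∀ i ∈ Finset.range (N+1), (0:ℝ) ≤ |f.coeff i| := fun i _ => abs_nonneg _
  have hS1 : 1 ≤ S := by
    have hm : N ∈ Finset.range (N + 1) := Finset.self_mem_range_succ N
    have := Finset.single_le_sum (f := fun i => |f.coeff i|) hS0 hm
    have hc := hf.coeff_natDegree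
    rw [← hNdef] at hc
    simpa [hc] using this
  have hSnn : (0:ℝ) ≤ S := by linarith
  have hx1 : (2 : ℝ) ≤ |x| := le_trans (by linarith) hx
  set g := f - X ^ N with hgdef
  have hgd : g.natDegree < N := by
    have hd : degree (f - X ^ N) < degree f := by
      apply degree_sub_lt
      · rw [degree_X_pow, degree_eq_natDegree hf.ne_zero]
      · exact hf.ne_zero
      · simp [hf.leadingCoeff, leadingCoeff_X_pow]
    rcases eq_or_ne g 0 with h0 | h0
    · simpa [h0] using hN0
    · exact (natDegree_lt_iff_degree_lt (n := N) h0).2 (by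
        rw [degree_eq_natDegree hf.ne_zero] at hd
        exact_mod_cast hd)
  have hgle : |g.eval x| ≤ (∑ i ∈ Finset.range N, |g.coeff i|) * max 1 |x| ^ (N-1) :=
    aux_eval_le g N (N-1) hgd (by omega) x
  have hcoe : ∀ i ∈ Finset.range N, |g.coeff i| = |f.coeff i| := by
    intro i hi
    have : (X ^ N : ℝ[X]).coeff i = 0 := by
      rw [coeff_X_pow]
      simp [Nat.ne_of_lt (Finset.mem_range.1 hi)]
    simp [hgdef, coeff_sub, this]
  have hsum : (∑ i ∈ Finset.range N, |g.coeff i|) ≤ S := by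
    rw [Finset.sum_congr rfl hcoe, hSdef]
    exact Finset.sum_le_sum_of_subset_of_nonneg
      (Finset.range_subset_range.2 (by omega)) (fun i hi _ => abs_nonneg _)
  have hmax : max 1 |x| = |x| := max_eq_right (by linarith)
  have hg2 : |g.eval x| ≤ S * |x| ^ (N-1) := by
    rw [hmax] at hgle
    exact hgle.trans (mul_le_mul_of_nonneg_right hsum (by positivity))
  have hfx : f.eval x = x ^ N + g.eval x := by
    simp [hgdef, eval_sub, eval_pow, eval_X]
  obtain ⟨m, hm⟩ : ∃ m, N = m + 1 := ⟨N - 1, by omega⟩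
  have hpow : |x| ^ N = |x| * |x| ^ (N - 1) := by
    rw [hm]; simp [pow_succ, mul_comm]
  have hxNm : (0:ℝ) ≤ |x| ^ (N-1) := by positivity
  have h1 : |x| ^ N - |g.eval x| ≤ |f.eval x| := by
    have : |x| ^ N = |x ^ N| := (abs_pow x N).symm
    rw [hfx, this]
    have := abs_add_le (x ^ N + g.eval x) (-(g.eval x))
    simp at this
    calc |x ^ N| - |g.eval x| ≤ |x ^ N + g.eval x| := by
          have := abs_sub_abs_le_abs_sub (x ^ N) (-(g.eval x))
          simp at this
          linarith [abs_neg (g.eval x)]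
      _ = |x ^ N + g.eval x| := rfl
  have hSx : S * |x| ^ (N-1) ≤ (|x| / 2) * |x| ^ (N-1) :=
    mul_le_mul_of_nonneg_right (by linarith) hxNm
  have := hg2.trans hSx
  rw [hpow]
  nlinarith [h1, hpow]

theorem stmt_16 (f : ℝ[X]) (hf : f.Monic) (N : ℕ) (hN : f.natDegree = N) (hN2 : 2 < N)
    (B : ℝ) (hB : B < 0) :
    ∃ C > (0 : ℝ), ∀ b ≤ B, ∀ α : ℝ,
      ((f %ₘ (X ^ 2 - Polynomial.C α * X - Polynomial.C b)).coeff 1 = 0 ∨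
       (f %ₘ (X ^ 2 - Polynomial.C α * X - Polynomial.C b)).coeff 0 = 0) →
      |α| ≤ C * |b| ^ ((1 : ℝ) / 2) := by
  obtain ⟨k, hk⟩ : ∃ k, N = k + 3 := ⟨N - 3, by omega⟩
  set S := ∑ i ∈ Finset.range (f.natDegree + 1), |f.coeff i| with hSdef
  have hS1 : 1 ≤ S := by
    have hm : f.natDegree ∈ Finset.range (f.natDegree + 1) := Finset.self_mem_range_succ _
    have := Finset.single_le_sum (f := fun i => |f.coeff i|) (fun i _ => abs_nonneg _) hm
    simpa [hf.coeff_natDegree] using this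
  set sB := Real.sqrt (-B) with hsBdef
  have hsB0 : 0 < sB := Real.sqrt_pos.2 (by linarith)
  set K := (4 + 8*S) * (1 + sB⁻¹)^3 with hKdef
  have hK0 : 0 < K := by positivity
  have hu0 : 0 < sB⁻¹ := by positivity
  have husB : sB⁻¹ * sB = 1 := inv_mul_cancel₀ (ne_of_gt hsB0)
  have hSnn : (0:ℝ) ≤ 4 + 8*S := by linarith
  have hKbig : 4 + 8*S ≤ K := by
    have hcube : (1:ℝ) ≤ (1+sB⁻¹)^3 := one_le_pow₀ (by linarith)
    calc 4 + 8*S = (4+8*S) * 1 := by ring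
      _ ≤ (4+8*S) * (1+sB⁻¹)^3 := mul_le_mul_of_nonneg_left hcube hSnn
      _ = K := hKdef.symm
  have hKsB : 4 + 8*S ≤ K * sB := by
    have h1 : sB⁻¹ ≤ (1+sB⁻¹)^3 := by nlinarith [sq_nonneg sB⁻¹]
    have h2 : (1:ℝ) ≤ (1+sB⁻¹)^3 * sB := by
      calc (1:ℝ) = sB⁻¹ * sB := husB.symm
        _ ≤ (1+sB⁻¹)^3 * sB := mul_le_mul_of_nonneg_right h1 hsB0.le
    calc 4 + 8*S = (4+8*S) * 1 := by ring
      _ ≤ (4+8*S) * ((1+sB⁻¹)^3 * sB) := mul_le_mul_of_nonneg_left h2 hSnn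
      _ = K * sB := by rw [hKdef]; ring
  have hKsB3 : 4 + 8*S ≤ K * sB^3 := by
    have h1 : K * sB^3 = (4+8*S) * ((1+sB⁻¹)*sB)^3 := by rw [hKdef]; ring
    have h2 : (1+sB⁻¹)*sB = sB + 1 := by field_simp
    have hcube : (1:ℝ) ≤ (sB+1)^3 := one_le_pow₀ (by linarith)
    rw [h1, h2]
    calc 4 + 8*S = (4+8*S) * 1 := by ring
      _ ≤ (4+8*S) * (sB+1)^3 := mul_le_mul_of_nonneg_left hcube hSnn
  clear_value S sB K
  refine ⟨K, hK0, ?_⟩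
  intro b hb α hroot
  by_contra hcon
  push_neg at hcon
  have hb0 : b < 0 := lt_of_le_of_lt hb hB
  set t := Real.sqrt (-b) with htdef
  have ht0 : 0 < t := Real.sqrt_pos.2 (by linarith)
  have ht2 : t^2 = -b := Real.sq_sqrt (by linarith)
  have htB : sB ≤ t := by rw [htdef, hsBdef]; exact Real.sqrt_le_sqrt (by linarith)
  have habs : |b| ^ ((1:ℝ)/2) = t := by
    rw [abs_of_neg hb0, htdef, Real.sqrt_eq_rpow]
  clear_value t
  have hα : K * t < |α| := by rw [habs] at hcon; exact hcon
  -- discriminant positivity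
  have hKt4 : 4 + 8*S ≤ K * t :=
    le_trans hKsB (mul_le_mul_of_nonneg_left htB hK0.le)
  have hK12 : (12:ℝ) ≤ K := by linarith
  have hCt : 2*t < |α| := by
    have h2K : 2*t < K*t := mul_lt_mul_of_pos_right (by linarith) ht0
    linarith
  have hD : 0 < α^2 + 4*b := by
    have h1 : (2*t)^2 < |α|^2 := pow_lt_pow_left₀ hCt (by positivity) (by norm_num)
    rw [sq_abs] at h1
    have h2 : (2*t)^2 = 4*t^2 := by ring
    linarith [ht2]
  -- construct roots r, s
  obtain ⟨r, s, hsum, hmul, hrbig, hrs_ne⟩ :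
      ∃ r s : ℝ, r + s = α ∧ r * s = -b ∧ |α| ≤ 2 * |r| ∧ r ≠ s := by
    set d := Real.sqrt (α^2+4*b) with hd
    have hd0 : 0 < d := Real.sqrt_pos.2 hD
    have hd2 : d^2 = α^2+4*b := Real.sq_sqrt hD.le
    clear_value d
    rcases le_or_gt 0 α with hpos | hneg
    · refine ⟨(α+d)/2, (α-d)/2, by ring, by linear_combination (-1/4 : ℝ) * hd2,
        ?_, by intro h; linarith⟩
      rw [abs_of_nonneg hpos, abs_of_nonneg (by linarith)]
      linarith
    · refine ⟨(α-d)/2, (α+d)/2, by ring, by linear_combination (-1/4 : ℝ) * hd2,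
        ?_, by intro h; linarith⟩
      rw [abs_of_neg hneg, abs_of_neg (by linarith)]
      linarith
  have hα0 : 0 < |α| := lt_trans (mul_pos hK0 ht0) hα
  have hr0 : 0 < |r| := by linarith
  have hrCt : K * t < 2 * |r| := lt_of_lt_of_le hα hrbig
  have hst : |r| * |s| = t^2 := by
    rw [← abs_mul, hmul, abs_of_pos (by linarith), ht2]
  have hs0 : 0 < |s| := by
    have hts : 0 < |r| * |s| := by rw [hst]; positivity
    rcases mul_pos_iff.mp hts with ⟨_, h⟩ | ⟨h, _⟩
    · exact h
    · exact absurd h (not_lt.2 (abs_nonneg r))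
  have hr_big2 : 4 + 8 * S < 2 * |r| := lt_of_le_of_lt hKt4 hrCt
  have hr1 : 1 ≤ |r| := by linarith
  have hrS : 2 * S ≤ |r| := by linarith
  -- lower bound on |f(r)|
  have hfr : |r| ^ N ≤ 2 * |f.eval r| := by
    rw [← hN]
    refine aux_eval_ge f hf (by omega) r ?_
    rw [← hSdef]; linarith
  -- upper bound on |f(s)|
  have hfs : |f.eval s| ≤ S * max 1 |s| ^ N := by
    have h := aux_eval_le f (f.natDegree + 1) f.natDegree (Nat.lt_succ_self _) le_rfl s
    have h2 : S = ∑ i ∈ Finset.range (N + 1), |f.coeff i| := by rw [hSdef, hN]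
    rw [hN, ← h2] at h
    exact h
  -- remainder structure
  have hqmon : (X ^ 2 - Polynomial.C α * X - Polynomial.C b : ℝ[X]).Monic := by monicity!
  have hqdeg : (X ^ 2 - Polynomial.C α * X - Polynomial.C b : ℝ[X]).degree = 2 := by
    compute_degree!
  set q : ℝ[X] := X ^ 2 - Polynomial.C α * X - Polynomial.C b with hqdef
  have hq : q.Monic := hqmon
  have hqd : q.degree = 2 := hqdeg
  have hdeg : (f %ₘ q).natDegree < 2 := by
    have hlt : (f %ₘ q).degree < 2 := hqd ▸ degree_modByMonic_lt f hq
    rcases eq_or_ne (f %ₘ q) 0 with h0 | h0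
    · simp [h0]
    · exact (natDegree_lt_iff_degree_lt h0).2 (by exact_mod_cast hlt)
  have heval : ∀ x : ℝ, x^2 - α*x - b = 0 →
      f.eval x = (f %ₘ q).coeff 0 + (f %ₘ q).coeff 1 * x := by
    intro x hx
    conv_lhs => rw [← modByMonic_add_div f q]
    rw [eval_add, eval_mul]
    have hq0 : q.eval x = 0 := by
      simp only [hqdef, eval_sub, eval_pow, eval_mul, eval_X, eval_C]
      linarith [hx]
    rw [hq0, zero_mul, add_zero, eval_eq_sum_range' hdeg]
    simp [Finset.sum_range_succ]
  have hqr : r^2 - α*r - b = 0 := by linear_combination r * hsum - hmul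
  have hqs : s^2 - α*s - b = 0 := by linear_combination s * hsum - hmul
  -- key inequality 1 : |f(s)| < |f(r)|
  have key1 : |f.eval s| < |f.eval r| := by
    rcases le_or_gt |s| 1 with h1 | h1
    · have hfs' : |f.eval s| ≤ S := by
        rw [max_eq_left h1, one_pow, mul_one] at hfs; exact hfs
      have h3 : |r|^3 ≤ |r|^N := pow_le_pow_right₀ hr1 (by omega)
      have hr3 : (2:ℝ) ≤ |r| := by linarith
      have e1 : 2 + 4*S ≤ |r| := by linarith
      have e2 : (2+4*S)*(2*2) ≤ |r| * (|r| * |r|) := by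
        apply mul_le_mul e1 ?_ (by norm_num) (by linarith)
        exact mul_le_mul hr3 hr3 (by norm_num) (by linarith)
      have e3 : |r|^3 = |r| * (|r| * |r|) := by ring
      linarith
    · rw [max_eq_right h1.le] at hfs
      have e1 : (K*t)^2 < (2*|r|)^2 :=
        pow_lt_pow_left₀ hrCt (by positivity) (by norm_num)
      have e1a : |r| * (K^2*|s|) = (K*t)^2 := by
        rw [show |r| * (K^2 * |s|) = K^2 * (|r| * |s|) from by ring, hst]; ring
      have e1b : |r| * (4*|r|) = (2*|r|)^2 := by ring
      have e2 : K^2*|s| < 4*|r| := by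
        refine (mul_lt_mul_iff_right₀ hr0).mp ?_
        rw [e1a, e1b]; exact e1
      have hK1 : (1:ℝ) ≤ K := by linarith
      have hK8 : 8*S ≤ K^2 := by
        have h8 : 8*S ≤ K := by linarith
        calc 8*S = (8*S)*1 := by ring
          _ ≤ K*K := mul_le_mul h8 hK1 zero_le_one hK0.le
          _ = K^2 := by ring
      have e4 : 2*S*|s| < |r| := by
        have hm := mul_le_mul_of_nonneg_right hK8 hs0.le
        linarith [hm, e2]
      have e5 : (2*S*|s|)^N < |r|^N :=
        pow_lt_pow_left₀ e4 (by positivity) (by omega)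
      have e6 : 2*S*|s|^N ≤ (2*S*|s|)^N := by
        rw [mul_pow]
        have h2S : 2*S ≤ (2*S)^N := le_self_pow₀ (by linarith) (by omega)
        have hsN : (0:ℝ) ≤ |s|^N := by positivity
        exact mul_le_mul_of_nonneg_right h2S hsN
      linarith [hfr, hfs, e5, e6]
  -- key inequality 2 : |r| * |f(s)| < |s| * |f(r)|
  have key2 : |r| * |f.eval s| < |s| * |f.eval r| := by
    have h2 : 2 * S * max 1 |s| ^ (k+3) < t^2 * |r|^(k+1) := by
      rcases le_or_gt |s| 1 with h1 | h1
      · rw [max_eq_left h1, one_pow, mul_one]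
        have hrk : |r| ≤ |r|^(k+1) := le_self_pow₀ hr1 (by omega)
        have hKt3 : 4 + 8*S ≤ K * t^3 := by
          have ht3 : sB^3 ≤ t^3 := pow_le_pow_left₀ hsB0.le htB 3
          have := mul_le_mul_of_nonneg_left ht3 hK0.le
          linarith [hKsB3]
        have ha1 : t^2 * (K*t/2) ≤ t^2 * |r| :=
          mul_le_mul_of_nonneg_left (by linarith [hrCt]) (by positivity)
        have ha2 : t^2 * |r| ≤ t^2 * |r|^(k+1) :=
          mul_le_mul_of_nonneg_left hrk (by positivity)
        have heq : t^2 * (K*t/2) = K*t^3/2 := by ring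
        linarith
      · rw [max_eq_right h1.le]
        have hrt : (K/2) * t < |r| := by linarith [hrCt]
        have hp1 : ((K/2)*t)^(2*k+4) < |r|^(2*k+4) := by
          apply pow_lt_pow_left₀ hrt (by positivity)
          omega
        have hp2 : (K/2)^2 ≤ (K/2)^(2*k+4) :=
          pow_le_pow_right₀ (by linarith) (by omega)
        have hp3 : 2*S*t^(2*k+4) < |r|^(2*k+4) := by
          have ht24 : (0:ℝ) < t^(2*k+4) := by positivity
          have hexp : ((K/2)*t)^(2*k+4) = (K/2)^(2*k+4) * t^(2*k+4) := by rw [mul_pow]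
          have h2S : 2*S ≤ (K/2)^2 := by
            calc 2*S = (2*S)*1 := by ring
              _ ≤ (K/2)*(K/2) := mul_le_mul (by linarith) (by linarith)
                  zero_le_one (by linarith)
              _ = (K/2)^2 := by ring
          have hmm := mul_le_mul_of_nonneg_right (h2S.trans hp2) ht24.le
          linarith [hp1, hexp, hmm]
        -- |s|^(k+3) * |r|^(k+3) = t^(2k+6)
        have hprod : |s|^(k+3) * |r|^(k+3) = t^(2*k+4) * t^2 := by
          rw [← mul_pow, mul_comm |s| |r|, hst]
          rw [← pow_mul, ← pow_add]
          ring_nf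
        have hrk3 : (0:ℝ) < |r|^(k+3) := by positivity
        have hsplit : |r|^(2*k+4) = |r|^(k+1) * |r|^(k+3) := by
          rw [← pow_add]; ring_nf
        refine lt_of_mul_lt_mul_right ?_ hrk3.le
        calc 2 * S * |s| ^ (k + 3) * |r|^(k+3) = 2*S*(t^(2*k+4) * t^2) := by
              rw [mul_assoc, hprod]
          _ = (2*S*t^(2*k+4)) * t^2 := by ring
          _ < |r|^(2*k+4) * t^2 := mul_lt_mul_of_pos_right hp3 (by positivity)
          _ = t^2 * |r|^(k+1) * |r|^(k+3) := by rw [hsplit]; ring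
    have hfs' : |f.eval s| ≤ S * max 1 |s| ^ (k+3) := by rwa [← hk]
    have hmax0 : (0:ℝ) < max 1 |s| ^ (k+3) := by positivity
    have step1 : 2 * (|r| * |f.eval s|) < t^2 * |r|^(k+2) := by
      have : 2 * (|r| * |f.eval s|) ≤ |r| * (2 * S * max 1 |s| ^ (k+3)) := by
        have hm := mul_le_mul_of_nonneg_left hfs' (by positivity : (0:ℝ) ≤ 2*|r|)
        linarith [hm]
      have h3 : |r| * (2 * S * max 1 |s| ^ (k+3)) < |r| * (t^2 * |r|^(k+1)) :=
        mul_lt_mul_of_pos_left h2 hr0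
      have h4 : |r| * (t^2 * |r|^(k+1)) = t^2 * |r|^(k+2) := by
        rw [pow_succ]; ring
      linarith
    have hsrN : |s| * |r|^N = t^2 * |r|^(k+2) := by
      rw [hk]
      have : |s| * |r|^(k+3) = (|r| * |s|) * |r|^(k+2) := by rw [pow_succ]; ring
      rw [this, hst]
    have h5 := mul_le_mul_of_nonneg_left hfr hs0.le
    linarith [step1, hsrN, h5]
  -- conclude
  have er := heval r hqr
  have es := heval s hqs
  rcases hroot with hP | hQ
  · rw [hP, zero_mul, add_zero] at er es
    rw [er, es] at key1
    exact lt_irrefl _ key1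
  · rw [hQ, zero_add] at er es
    rw [er, es, abs_mul, abs_mul] at key2
    linarith [key2]
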